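/- Let A, B, g > 0 with g > 1. The function F(x, y) = Δ_s/(x σ_s²) + Δ_d/(y σ_d²) (with Δ_s, Δ_d, σ_s², σ_d² > 0 fixed) attains its minimum over the constraint set {(x,y) : x > 0, y > 0, (1 + A x)(1 + B y) = g} at x* = (g - 1)/(√(Δ_d σ_s² A B g/(Δ_s σ_d²)) + A) and y* = (g - 1)/(√(Δ_s σ_d² A B g/(Δ_d σ_s²)) + B). -/

import Mathlib

open Real

set_option maxHeartbeats 1000000 in
/-- Optimal secondary power allocation (Lemma 1, case 2): the pair `(x*, y*)` satisfies
the QoS constraint with equality and minimizes `F(x,y) = Δs/(x σs²) + Δd/(y σd²)` over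
the constraint set `{(x,y) : x,y > 0, (1+Ax)(1+By) = g}`. -/
theorem stmt_6 (A B g Δs Δd σs σd : ℝ)
    (hA : 0 < A) (hB : 0 < B) (hg : 1 < g)
    (hΔs : 0 < Δs) (hΔd : 0 < Δd) (hσs : 0 < σs) (hσd : 0 < σd) :
    (1 + A * ((g - 1) / (Real.sqrt (Δd * σs * A * B * g / (Δs * σd)) + A))) *
        (1 + B * ((g - 1) / (Real.sqrt (Δs * σd * A * B * g / (Δd * σs)) + B))) = g ∧
    ∀ x y : ℝ, 0 < x → 0 < y → (1 + A * x) * (1 + B * y) = g →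
      Δs / (((g - 1) / (Real.sqrt (Δd * σs * A * B * g / (Δs * σd)) + A)) * σs) +
          Δd / (((g - 1) / (Real.sqrt (Δs * σd * A * B * g / (Δd * σs)) + B)) * σd)
        ≤ Δs / (x * σs) + Δd / (y * σd) := by
  have harg1 : 0 < Δd * σs * A * B * g / (Δs * σd) := by positivity
  have harg2 : 0 < Δs * σd * A * B * g / (Δd * σs) := by positivity
  set s := Real.sqrt (Δd * σs * A * B * g / (Δs * σd)) with hs_def
  set t := Real.sqrt (Δs * σd * A * B * g / (Δd * σs)) with ht_def
  have hs : 0 < s := Real.sqrt_pos.mpr harg1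
  have ht : 0 < t := Real.sqrt_pos.mpr harg2
  have hst : s * t = A * B * g := by
    rw [hs_def, ht_def, ← Real.sqrt_mul harg1.le,
      show (Δd * σs * A * B * g / (Δs * σd)) * (Δs * σd * A * B * g / (Δd * σs))
        = (A * B * g) ^ 2 by field_simp]
    exact Real.sqrt_sq (by positivity)
  have hg1 : (0:ℝ) < g - 1 := by linarith
  have hsA : 0 < s + A := by linarith
  have htB : 0 < t + B := by linarith
  constructor
  · field_simp
    ring_nf
    nlinarith [hst]
  · intro x y hx hy hxy
    set K := Real.sqrt (A * B * g * Δs * Δd / (σs * σd)) with hK_def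
    have hK : 0 < K := Real.sqrt_pos.mpr (by positivity)
    have hK2 : K ^ 2 = A * B * g * Δs * Δd / (σs * σd) :=
      Real.sq_sqrt (by positivity)
    have hK1 : Δs * s = K * σs := by
      have h1 : Δs = Real.sqrt (Δs ^ 2) := (Real.sqrt_sq hΔs.le).symm
      rw [h1, hs_def, ← Real.sqrt_mul (by positivity),
        show Δs ^ 2 * (Δd * σs * A * B * g / (Δs * σd))
          = σs ^ 2 * (A * B * g * Δs * Δd / (σs * σd)) by field_simp,
        Real.sqrt_mul (by positivity), Real.sqrt_sq hσs.le, hK_def]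
      ring
    have hK1' : Δd * t = K * σd := by
      have h1 : Δd = Real.sqrt (Δd ^ 2) := (Real.sqrt_sq hΔd.le).symm
      rw [h1, ht_def, ← Real.sqrt_mul (by positivity),
        show Δd ^ 2 * (Δs * σd * A * B * g / (Δd * σs))
          = σd ^ 2 * (A * B * g * Δs * Δd / (σs * σd)) by field_simp,
        Real.sqrt_mul (by positivity), Real.sqrt_sq hσd.le, hK_def]
      ring
    set p := Δs * B * y * (1 + A * x) / (σs * x) with hp_def
    set q := Δd * A * x * (1 + B * y) / (σd * y) with hq_def
    have h1Ax : 0 < 1 + A * x := by positivity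
    have h1By : 0 < 1 + B * y := by positivity
    have hp : 0 < p := by rw [hp_def]; positivity
    have hq : 0 < q := by rw [hq_def]; positivity
    have hpq : p * q = K ^ 2 := by
      have h : p * q = A * B * Δs * Δd / (σs * σd) * ((1 + A * x) * (1 + B * y)) := by
        rw [hp_def, hq_def]; field_simp
      rw [h, hxy, hK2]; ring
    have key : 2 * K ≤ p + q := by
      nlinarith [sq_nonneg (p - q), sq_nonneg (p + q - 2 * K)]
    have e1 : Δs / (((g - 1) / (s + A)) * σs) = (K + A * Δs / σs) / (g - 1) := by
      field_simp
      linear_combination hK1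
    have e2 : Δd / (((g - 1) / (t + B)) * σd) = (K + B * Δd / σd) / (g - 1) := by
      field_simp
      linear_combination hK1'
    have hg' : g - 1 = A * x + B * y + A * B * (x * y) := by linear_combination -hxy
    have hden : A * x + B * y + A * B * (x * y) ≠ 0 := by positivity
    clear_value s t K p q
    have hF : Δs / (x * σs) + Δd / (y * σd)
        = (A * Δs / σs + B * Δd / σd + p + q) / (g - 1) := by
      rw [hp_def, hq_def, hg']
      field_simp
      ring
    rw [e1, e2, hF, ← add_div]
    exact (div_le_div_iff_of_pos_right hg1).mpr (by linarith)
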